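/- For every solution (S,V,E,I,Q,H,R) of the SVEIQHR model whose initial value (S(0),V(0),E(0),I(0),Q(0),H(0),R(0)) lies in [0,∞)⁷, one has (S(t),V(t),E(t),I(t),Q(t),H(t),R(t)) ∈ [0,∞)⁷ for every t ≥ 0. -/

import Mathlib

open Real Filter Polynomial Matrix Topology

set_option maxHeartbeats 1000000
private lemma myMulLb {a b eta M : ℝ} (ha : -eta ≤ a) (hb : -eta ≤ b)
    (ha' : |a| ≤ M) (hb' : |b| ≤ M) (heta : 0 ≤ eta) : -(eta * M) ≤ a * b := by
  rcases le_or_gt 0 a with h | h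
  · have h1 : a * (-eta) ≤ a * b := mul_le_mul_of_nonneg_left hb h
    have h2 : a ≤ M := le_trans (le_abs_self a) ha'
    nlinarith
  · have hbM : b ≤ M := le_trans (le_abs_self b) hb'
    have h1 : a * M ≤ a * b := mul_le_mul_of_nonpos_left hbM h.le
    have hM0 : 0 ≤ M := le_trans (abs_nonneg a) ha'
    nlinarith

private lemma left_nonneg {g : ℝ → ℝ} {t₀ : ℝ} (h0 : 0 < t₀) (hc : ContinuousAt g t₀)
    (h : ∀ s, 0 ≤ s → s < t₀ → 0 < g s) : 0 ≤ g t₀ := by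
  have htend : Tendsto g (𝓝[<] t₀) (𝓝 (g t₀)) := hc.continuousWithinAt.tendsto
  refine ge_of_tendsto htend ?_
  filter_upwards [Ioo_mem_nhdsLT_of_mem ⟨h0, le_refl t₀⟩] with s hs
  exact (h s hs.1.le hs.2).le

private lemma deriv_nonpos_touch {g : ℝ → ℝ} {t₀ d : ℝ} (h0 : 0 < t₀)
    (hd : HasDerivAt g d t₀) (hpos : ∀ s, 0 ≤ s → s < t₀ → 0 < g s) (hz : g t₀ = 0) :
    d ≤ 0 := by
  have hd' : HasDerivWithinAt g d (Set.Iio t₀) t₀ := hd.hasDerivWithinAt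
  rw [hasDerivWithinAt_iff_tendsto_slope] at hd'
  have hset : Set.Iio t₀ \ {t₀} = Set.Iio t₀ :=
    Set.diff_singleton_eq_self (by simp)
  rw [hset] at hd'
  refine le_of_tendsto hd' ?_
  filter_upwards [Ioo_mem_nhdsLT_of_mem ⟨h0, le_refl t₀⟩] with s hs
  have hsl : slope g t₀ s = g s / (s - t₀) := by
    rw [slope_def_field, hz, sub_zero]
  rw [hsl]
  exact (div_neg_of_pos_of_neg (hpos s hs.1.le hs.2) (by linarith [hs.2])).le

private lemma touch_contra {g : ℝ → ℝ} {t₀ d : ℝ} (h0 : 0 < t₀)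
    (hd : HasDerivAt g d t₀) (hpos : ∀ s, 0 ≤ s → s < t₀ → 0 < g s)
    (hle : g t₀ ≤ 0) (hdpos : 0 < d) : False := by
  have hz : g t₀ = 0 := le_antisymm hle (left_nonneg h0 hd.continuousAt hpos)
  linarith [deriv_nonpos_touch h0 hd hpos hz]

private lemma nonneg_of_eps {x c : ℝ} (hc : 0 < c) (h : ∀ ε > 0, 0 < x + ε * c) : 0 ≤ x := by
  by_contra h'
  push_neg at h'
  have hx := h (-x / c) (div_pos (neg_pos.2 h') hc)
  rw [div_mul_cancel₀ _ hc.ne'] at hx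
  linarith

theorem stmt0
    (lam lam' mu mu' beta alpha theta gamma phi kappa tau : ℝ)
    (delta u1 u2 u3 u4 u5 : ℝ)
    (hlam : 0 < lam) (hlam' : 0 < lam') (hmu : 0 < mu) (hmu' : 0 < mu')
    (hbeta : 0 < beta) (halpha : 0 < alpha) (htheta : 0 < theta)
    (hgamma : 0 < gamma) (hphi : 0 < phi) (hkappa : 0 < kappa) (htau : 0 < tau)
    (hdelta : delta ∈ Set.Icc (0:ℝ) 1) (hu1 : u1 ∈ Set.Icc (0:ℝ) 1)
    (hu2 : u2 ∈ Set.Icc (0:ℝ) 1) (hu3 : u3 ∈ Set.Icc (0:ℝ) 1)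
    (hu4 : u4 ∈ Set.Icc (0:ℝ) 1) (hu5 : u5 ∈ Set.Icc (0:ℝ) 1)
    (S V E I Q H R : ℝ → ℝ)
    (hS : ∀ t ≥ (0:ℝ), HasDerivAt S (lam + alpha * R t - (1 - u2) * beta * S t * I t - u1 * S t - mu * S t) t)
    (hV : ∀ t ≥ (0:ℝ), HasDerivAt V (u1 * S t - (1 - delta) * beta * V t * I t - mu * V t) t)
    (hE : ∀ t ≥ (0:ℝ), HasDerivAt E ((1 - u2) * beta * S t * I t + (1 - delta) * beta * V t * I t - (theta + u3 + mu) * E t) t)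
    (hI : ∀ t ≥ (0:ℝ), HasDerivAt I (theta * E t - (gamma + u4 + u5 + mu + mu') * I t) t)
    (hQ : ∀ t ≥ (0:ℝ), HasDerivAt Q (lam' + u3 * E t + u4 * I t - (kappa + tau + mu) * Q t) t)
    (hH : ∀ t ≥ (0:ℝ), HasDerivAt H (tau * Q t + u5 * I t - (phi + mu + mu') * H t) t)
    (hR : ∀ t ≥ (0:ℝ), HasDerivAt R (gamma * I t + kappa * Q t + phi * H t - (alpha + mu) * R t) t)
    (hinit : 0 ≤ S 0 ∧ 0 ≤ V 0 ∧ 0 ≤ E 0 ∧ 0 ≤ I 0 ∧ 0 ≤ Q 0 ∧ 0 ≤ H 0 ∧ 0 ≤ R 0) :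
    ∀ t ≥ (0:ℝ), 0 ≤ S t ∧ 0 ≤ V t ∧ 0 ≤ E t ∧ 0 ≤ I t ∧ 0 ≤ Q t ∧ 0 ≤ H t ∧ 0 ≤ R t := by
  obtain ⟨hS0, hV0, hE0, hI0, hQ0, hH0, hR0⟩ := hinit
  intro T hT
  have hcS : ContinuousOn S (Set.Icc 0 T) := fun s hs => ((hS s hs.1).continuousAt).continuousWithinAt
  have hcV : ContinuousOn V (Set.Icc 0 T) := fun s hs => ((hV s hs.1).continuousAt).continuousWithinAt
  have hcE : ContinuousOn E (Set.Icc 0 T) := fun s hs => ((hE s hs.1).continuousAt).continuousWithinAt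
  have hcI : ContinuousOn I (Set.Icc 0 T) := fun s hs => ((hI s hs.1).continuousAt).continuousWithinAt
  have hcQ : ContinuousOn Q (Set.Icc 0 T) := fun s hs => ((hQ s hs.1).continuousAt).continuousWithinAt
  have hcH : ContinuousOn H (Set.Icc 0 T) := fun s hs => ((hH s hs.1).continuousAt).continuousWithinAt
  have hcR : ContinuousOn R (Set.Icc 0 T) := fun s hs => ((hR s hs.1).continuousAt).continuousWithinAt
  have hFcont : ContinuousOn (fun s => |S s| + |V s| + |E s| + |I s| + |Q s| + |H s| + |R s|)
      (Set.Icc 0 T) :=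
    (((((hcS.abs.add hcV.abs).add hcE.abs).add hcI.abs).add hcQ.abs).add hcH.abs).add hcR.abs
  obtain ⟨M, hM⟩ := isCompact_Icc.exists_bound_of_continuousOn hFcont
  have hMb : ∀ s ∈ Set.Icc (0:ℝ) T, |S s| ≤ M ∧ |V s| ≤ M ∧ |I s| ≤ M := by
    intro s hs
    have h1 := hM s hs
    rw [Real.norm_eq_abs] at h1
    have h2 := le_abs_self (|S s| + |V s| + |E s| + |I s| + |Q s| + |H s| + |R s|)
    refine ⟨?_, ?_, ?_⟩ <;>
      linarith [abs_nonneg (S s), abs_nonneg (V s), abs_nonneg (E s), abs_nonneg (I s),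
        abs_nonneg (Q s), abs_nonneg (H s), abs_nonneg (R s)]
  have hM0 : 0 ≤ M := le_trans (norm_nonneg _) (hM 0 ⟨le_refl 0, hT⟩)
  set K := alpha + gamma + kappa + phi + tau + theta + 3 + 3 * (beta * M) with hKdef
  have key : ∀ ε > (0:ℝ), ∀ s ∈ Set.Icc (0:ℝ) T, 0 < S s + ε * Real.exp (K * s) ∧ 0 < V s + ε * Real.exp (K * s) ∧ 0 < E s + ε * Real.exp (K * s) ∧ 0 < I s + ε * Real.exp (K * s) ∧ 0 < Q s + ε * Real.exp (K * s) ∧ 0 < H s + ε * Real.exp (K * s) ∧ 0 < R s + ε * Real.exp (K * s) := by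
    intro ε hε
    have hb : Continuous fun s : ℝ => ε * Real.exp (K * s) :=
      continuous_const.mul (Real.continuous_exp.comp (continuous_const.mul continuous_id))
    set A := {s : ℝ | s ∈ Set.Icc (0:ℝ) T ∧ (S s + ε * Real.exp (K * s) ≤ 0 ∨ V s + ε * Real.exp (K * s) ≤ 0 ∨ E s + ε * Real.exp (K * s) ≤ 0 ∨ I s + ε * Real.exp (K * s) ≤ 0 ∨ Q s + ε * Real.exp (K * s) ≤ 0 ∨ H s + ε * Real.exp (K * s) ≤ 0 ∨ R s + ε * Real.exp (K * s) ≤ 0)} with hAdef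
    have hApos : ∀ s ∈ Set.Icc (0:ℝ) T, s ∉ A → (0 < S s + ε * Real.exp (K * s) ∧ 0 < V s + ε * Real.exp (K * s) ∧ 0 < E s + ε * Real.exp (K * s) ∧ 0 < I s + ε * Real.exp (K * s) ∧ 0 < Q s + ε * Real.exp (K * s) ∧ 0 < H s + ε * Real.exp (K * s) ∧ 0 < R s + ε * Real.exp (K * s)) := by
      intro s hs hns
      have hd : ¬(S s + ε * Real.exp (K * s) ≤ 0 ∨ V s + ε * Real.exp (K * s) ≤ 0 ∨ E s + ε * Real.exp (K * s) ≤ 0 ∨ I s + ε * Real.exp (K * s) ≤ 0 ∨ Q s + ε * Real.exp (K * s) ≤ 0 ∨ H s + ε * Real.exp (K * s) ≤ 0 ∨ R s + ε * Real.exp (K * s) ≤ 0) := fun h => hns ⟨hs, h⟩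
      push_neg at hd
      exact hd
    have hAempty : A = ∅ := by
      by_contra hne
      rw [← Ne, ← Set.nonempty_iff_ne_empty] at hne
      have hclosed : IsClosed A := by
        have hrw : A = (Set.Icc (0:ℝ) T ∩ (fun s => S s + ε * Real.exp (K * s)) ⁻¹' Set.Iic 0) ∪ (Set.Icc (0:ℝ) T ∩ (fun s => V s + ε * Real.exp (K * s)) ⁻¹' Set.Iic 0) ∪ (Set.Icc (0:ℝ) T ∩ (fun s => E s + ε * Real.exp (K * s)) ⁻¹' Set.Iic 0) ∪ (Set.Icc (0:ℝ) T ∩ (fun s => I s + ε * Real.exp (K * s)) ⁻¹' Set.Iic 0) ∪ (Set.Icc (0:ℝ) T ∩ (fun s => Q s + ε * Real.exp (K * s)) ⁻¹' Set.Iic 0) ∪ (Set.Icc (0:ℝ) T ∩ (fun s => H s + ε * Real.exp (K * s)) ⁻¹' Set.Iic 0) ∪ (Set.Icc (0:ℝ) T ∩ (fun s => R s + ε * Real.exp (K * s)) ⁻¹' Set.Iic 0) := by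
          ext s
          simp only [hAdef, Set.mem_setOf_eq, Set.mem_union, Set.mem_inter_iff,
            Set.mem_preimage, Set.mem_Iic]
          tauto
        rw [hrw]
        refine (((((IsClosed.union ?_ ?_).union ?_).union ?_).union ?_).union ?_).union ?_ <;>
          exact ContinuousOn.preimage_isClosed_of_isClosed
            (ContinuousOn.add (by assumption) hb.continuousOn) isClosed_Icc isClosed_Iic
      have hbdd : BddBelow A := ⟨0, fun s hs => hs.1.1⟩
      set t₀ := sInf A with ht₀def
      have ht₀A : t₀ ∈ A := hclosed.csInf_mem hne hbdd
      have ht₀Icc : t₀ ∈ Set.Icc (0:ℝ) T := ht₀A.1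
      have hbefore : ∀ s, 0 ≤ s → s < t₀ →
          (0 < S s + ε * Real.exp (K * s) ∧ 0 < V s + ε * Real.exp (K * s) ∧ 0 < E s + ε * Real.exp (K * s) ∧ 0 < I s + ε * Real.exp (K * s) ∧ 0 < Q s + ε * Real.exp (K * s) ∧ 0 < H s + ε * Real.exp (K * s) ∧ 0 < R s + ε * Real.exp (K * s)) := by
        intro s h0s hst
        exact hApos s ⟨h0s, le_trans hst.le ht₀Icc.2⟩ (notMem_of_lt_csInf hst hbdd)
      have ht0pos : 0 < t₀ := by
        rcases lt_or_eq_of_le ht₀Icc.1 with h | h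
        · exact h
        · exfalso
          have h0A := ht₀A.2
          rw [← h] at h0A
          simp only [mul_zero, Real.exp_zero, mul_one] at h0A
          rcases h0A with h'|h'|h'|h'|h'|h'|h' <;> linarith
      set η := ε * Real.exp (K * t₀) with hηdef
      have hη : 0 < η := mul_pos hε (Real.exp_pos _)
      have hlbS : -η ≤ S t₀ := by
        have h0 := left_nonneg ht0pos (((hS t₀ ht₀Icc.1).continuousAt).add hb.continuousAt)
          (fun s h0 hlt => (hbefore s h0 hlt).1)
        simp only [Pi.add_apply] at h0
        linarith [h0]
      have hlbV : -η ≤ V t₀ := by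
        have h0 := left_nonneg ht0pos (((hV t₀ ht₀Icc.1).continuousAt).add hb.continuousAt)
          (fun s h0 hlt => (hbefore s h0 hlt).2.1)
        simp only [Pi.add_apply] at h0
        linarith [h0]
      have hlbE : -η ≤ E t₀ := by
        have h0 := left_nonneg ht0pos (((hE t₀ ht₀Icc.1).continuousAt).add hb.continuousAt)
          (fun s h0 hlt => (hbefore s h0 hlt).2.2.1)
        simp only [Pi.add_apply] at h0
        linarith [h0]
      have hlbI : -η ≤ I t₀ := by
        have h0 := left_nonneg ht0pos (((hI t₀ ht₀Icc.1).continuousAt).add hb.continuousAt)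
          (fun s h0 hlt => (hbefore s h0 hlt).2.2.2.1)
        simp only [Pi.add_apply] at h0
        linarith [h0]
      have hlbQ : -η ≤ Q t₀ := by
        have h0 := left_nonneg ht0pos (((hQ t₀ ht₀Icc.1).continuousAt).add hb.continuousAt)
          (fun s h0 hlt => (hbefore s h0 hlt).2.2.2.2.1)
        simp only [Pi.add_apply] at h0
        linarith [h0]
      have hlbH : -η ≤ H t₀ := by
        have h0 := left_nonneg ht0pos (((hH t₀ ht₀Icc.1).continuousAt).add hb.continuousAt)
          (fun s h0 hlt => (hbefore s h0 hlt).2.2.2.2.2.1)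
        simp only [Pi.add_apply] at h0
        linarith [h0]
      have hlbR : -η ≤ R t₀ := by
        have h0 := left_nonneg ht0pos (((hR t₀ ht₀Icc.1).continuousAt).add hb.continuousAt)
          (fun s h0 hlt => (hbefore s h0 hlt).2.2.2.2.2.2)
        simp only [Pi.add_apply] at h0
        linarith [h0]
      obtain ⟨hMS, hMV, hMI⟩ := hMb t₀ ht₀Icc
      have hde : HasDerivAt (fun s : ℝ => ε * Real.exp (K * s)) (ε * (Real.exp (K * t₀) * K)) t₀ := by
        have h1 : HasDerivAt (fun s : ℝ => K * s) K t₀ := by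
          simpa using (hasDerivAt_id t₀).const_mul K
        exact h1.exp.const_mul ε
      have hKη : ε * (Real.exp (K * t₀) * K) = η * K := by rw [hηdef]; ring
      have h1mu2 : 0 ≤ 1 - u2 := by linarith [hu2.2]
      have h1mdel : 0 ≤ 1 - delta := by linarith [hdelta.2]
      rcases ht₀A.2 with hle|hle|hle|hle|hle|hle|hle
      · -- S component
        have heq : S t₀ = -η := by linarith
        refine touch_contra ht0pos ((hS t₀ ht₀Icc.1).add hde)
          (fun s h0 hlt => (hbefore s h0 hlt).1) hle ?_
        rw [heq, hKη, hKdef]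
        have e2 : (1 - u2) * beta * (-η) * I t₀ ≤ beta * η * M := by
          nlinarith [mul_nonneg (mul_nonneg (mul_nonneg h1mu2 hbeta.le) hη.le)
              (by linarith [neg_abs_le (I t₀)] : 0 ≤ I t₀ + M),
            mul_nonneg (mul_nonneg (mul_nonneg hu2.1 hbeta.le) hη.le) hM0]
        linarith [mul_le_mul_of_nonneg_left hlbR halpha.le, e2,
          mul_nonneg hu1.1 hη.le, mul_nonneg hmu.le hη.le,
          mul_nonneg (mul_nonneg hbeta.le hM0) hη.le,
          mul_pos hη hgamma, mul_pos hη hkappa, mul_pos hη hphi,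
          mul_pos hη htau, mul_pos hη htheta, mul_pos hη halpha, hη]
      · -- V component
        have heq : V t₀ = -η := by linarith
        refine touch_contra ht0pos ((hV t₀ ht₀Icc.1).add hde)
          (fun s h0 hlt => (hbefore s h0 hlt).2.1) hle ?_
        rw [heq, hKη, hKdef]
        have e2 : (1 - delta) * beta * (-η) * I t₀ ≤ beta * η * M := by
          nlinarith [mul_nonneg (mul_nonneg (mul_nonneg h1mdel hbeta.le) hη.le)
              (by linarith [neg_abs_le (I t₀)] : 0 ≤ I t₀ + M),
            mul_nonneg (mul_nonneg (mul_nonneg hdelta.1 hbeta.le) hη.le) hM0]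
        linarith [mul_le_mul_of_nonneg_left hlbS hu1.1, e2,
          mul_le_mul_of_nonneg_right hu1.2 hη.le,
          mul_nonneg hmu.le hη.le,
          mul_nonneg (mul_nonneg hbeta.le hM0) hη.le,
          mul_pos hη hgamma, mul_pos hη hkappa, mul_pos hη hphi,
          mul_pos hη htau, mul_pos hη htheta, mul_pos hη halpha, hη]
      · -- E component
        have heq : E t₀ = -η := by linarith
        refine touch_contra ht0pos ((hE t₀ ht₀Icc.1).add hde)
          (fun s h0 hlt => (hbefore s h0 hlt).2.2.1) hle ?_
        rw [heq, hKη, hKdef]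
        have e1 : -(η * M) ≤ S t₀ * I t₀ := myMulLb hlbS hlbI hMS hMI hη.le
        have e2 : -(η * M) ≤ V t₀ * I t₀ := myMulLb hlbV hlbI hMV hMI hη.le
        linarith [mul_le_mul_of_nonneg_left e1 (mul_nonneg h1mu2 hbeta.le),
          mul_le_mul_of_nonneg_left e2 (mul_nonneg h1mdel hbeta.le),
          mul_nonneg (mul_nonneg (mul_nonneg hu2.1 hbeta.le) hη.le) hM0,
          mul_nonneg (mul_nonneg (mul_nonneg hdelta.1 hbeta.le) hη.le) hM0,
          mul_nonneg htheta.le hη.le, mul_nonneg hu3.1 hη.le, mul_nonneg hmu.le hη.le,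
          mul_nonneg (mul_nonneg hbeta.le hM0) hη.le,
          mul_pos hη hgamma, mul_pos hη hkappa, mul_pos hη hphi,
          mul_pos hη htau, mul_pos hη htheta, mul_pos hη halpha, hη]
      · -- I component
        have heq : I t₀ = -η := by linarith
        refine touch_contra ht0pos ((hI t₀ ht₀Icc.1).add hde)
          (fun s h0 hlt => (hbefore s h0 hlt).2.2.2.1) hle ?_
        rw [heq, hKη, hKdef]
        linarith [mul_le_mul_of_nonneg_left hlbE htheta.le,
          mul_nonneg hgamma.le hη.le, mul_nonneg hu4.1 hη.le, mul_nonneg hu5.1 hη.le,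
          mul_nonneg hmu.le hη.le, mul_nonneg hmu'.le hη.le,
          mul_nonneg (mul_nonneg hbeta.le hM0) hη.le,
          mul_pos hη hgamma, mul_pos hη hkappa, mul_pos hη hphi,
          mul_pos hη htau, mul_pos hη halpha, mul_pos hη htheta, hη]
      · -- Q component
        have heq : Q t₀ = -η := by linarith
        refine touch_contra ht0pos ((hQ t₀ ht₀Icc.1).add hde)
          (fun s h0 hlt => (hbefore s h0 hlt).2.2.2.2.1) hle ?_
        rw [heq, hKη, hKdef]
        linarith [mul_le_mul_of_nonneg_left hlbE hu3.1,
          mul_le_mul_of_nonneg_left hlbI hu4.1,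
          mul_le_mul_of_nonneg_right hu3.2 hη.le,
          mul_le_mul_of_nonneg_right hu4.2 hη.le,
          mul_nonneg hkappa.le hη.le, mul_nonneg htau.le hη.le, mul_nonneg hmu.le hη.le,
          mul_nonneg (mul_nonneg hbeta.le hM0) hη.le,
          mul_pos hη hgamma, mul_pos hη hkappa, mul_pos hη hphi,
          mul_pos hη htau, mul_pos hη htheta, mul_pos hη halpha, hη]
      · -- H component
        have heq : H t₀ = -η := by linarith
        refine touch_contra ht0pos ((hH t₀ ht₀Icc.1).add hde)
          (fun s h0 hlt => (hbefore s h0 hlt).2.2.2.2.2.1) hle ?_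
        rw [heq, hKη, hKdef]
        linarith [mul_le_mul_of_nonneg_left hlbQ htau.le,
          mul_le_mul_of_nonneg_left hlbI hu5.1,
          mul_le_mul_of_nonneg_right hu5.2 hη.le,
          mul_nonneg hphi.le hη.le, mul_nonneg hmu.le hη.le, mul_nonneg hmu'.le hη.le,
          mul_nonneg (mul_nonneg hbeta.le hM0) hη.le,
          mul_pos hη hgamma, mul_pos hη hkappa, mul_pos hη hphi,
          mul_pos hη htheta, mul_pos hη halpha, mul_pos hη htau, hη]
      · -- R component
        have heq : R t₀ = -η := by linarith
        refine touch_contra ht0pos ((hR t₀ ht₀Icc.1).add hde)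
          (fun s h0 hlt => (hbefore s h0 hlt).2.2.2.2.2.2) hle ?_
        rw [heq, hKη, hKdef]
        linarith [mul_le_mul_of_nonneg_left hlbI hgamma.le,
          mul_le_mul_of_nonneg_left hlbQ hkappa.le,
          mul_le_mul_of_nonneg_left hlbH hphi.le,
          mul_nonneg halpha.le hη.le, mul_nonneg hmu.le hη.le,
          mul_nonneg (mul_nonneg hbeta.le hM0) hη.le,
          mul_pos hη htau, mul_pos hη htheta, mul_pos hη hgamma,
          mul_pos hη hkappa, mul_pos hη hphi, mul_pos hη halpha, hη]
    intro s hs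
    have hns : s ∉ A := by rw [hAempty]; exact Set.notMem_empty s
    exact hApos s hs hns
  have hfin : ∀ g : ℝ → ℝ, (∀ ε > (0:ℝ), 0 < g T + ε * Real.exp (K * T)) → 0 ≤ g T :=
    fun g h => nonneg_of_eps (Real.exp_pos (K * T)) h
  exact ⟨hfin S (fun ε hε => (key ε hε T ⟨hT, le_refl T⟩).1),
    hfin V (fun ε hε => (key ε hε T ⟨hT, le_refl T⟩).2.1),
    hfin E (fun ε hε => (key ε hε T ⟨hT, le_refl T⟩).2.2.1),
    hfin I (fun ε hε => (key ε hε T ⟨hT, le_refl T⟩).2.2.2.1),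
    hfin Q (fun ε hε => (key ε hε T ⟨hT, le_refl T⟩).2.2.2.2.1),
    hfin H (fun ε hε => (key ε hε T ⟨hT, le_refl T⟩).2.2.2.2.2.1),
    hfin R (fun ε hε => (key ε hε T ⟨hT, le_refl T⟩).2.2.2.2.2.2)⟩
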